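/- For every integer n ≥ 3, C_4(n) := Σ_{k=1}^{n} (−1)^(k−1) · [2n, n−k] · k^4 equals (−1)^n · n(n+1) · (2n^3 − n^2 − 5n + 1) / (2(2n−3)(2n−5)). -/

import Mathlib

open Finset

/-- Rising factorial `(x)_n = x(x+1)⋯(x+n-1)`. -/
noncomputable def rfact (x : ℝ) : ℕ → ℝ
  | 0 => 1
  | n + 1 => rfact x n * (x + n)

/-- The bracket coefficient `[n, k] = (1/2)_n / ((1/2)_k (1/2)_{n-k})`. -/
noncomputable def brkt (n k : ℕ) : ℝ :=
  rfact (1 / 2) n / (rfact (1 / 2) k * rfact (1 / 2) (n - k))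

lemma rfact_succ (x : ℝ) (n : ℕ) : rfact x (n + 1) = rfact x n * (x + n) := rfl

lemma rfact_half_pos (n : ℕ) : 0 < rfact (1 / 2 : ℝ) n := by
  induction n with
  | zero => norm_num [rfact]
  | succ m ih =>
      rw [rfact_succ]
      have : (0 : ℝ) < 1 / 2 + m := by positivity
      positivity

/-- The telescoping polynomial. -/
noncomputable def Paux (n k : ℝ) : ℝ :=
  ((2 * n - 1) ^ 2 * k - 2 * (4 * n ^ 2 - 8 * n + 5) * k ^ 3 +
      (2 * n - 3) * (2 * n - 5) * k ^ 4 + 2 * (2 * n - 3) * k ^ 5) /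
    (2 * (2 * n - 3) * (2 * n - 5))

lemma brkt_rec (n k : ℕ) (h : k + 1 ≤ n) :
    brkt (2 * n) (n - (k + 1)) * (2 * (n : ℝ) + 2 * k + 1) =
      brkt (2 * n) (n - k) * (2 * (n : ℝ) - 2 * k - 1) := by
  have e1 : 2 * n - (n - (k + 1)) = (n + k) + 1 := by omega
  have e2 : 2 * n - (n - k) = n + k := by omega
  have e3 : n - k = (n - (k + 1)) + 1 := by omega
  unfold brkt
  rw [e1, e2, e3, rfact_succ, rfact_succ]
  have hc : ((n - (k + 1) : ℕ) : ℝ) = (n : ℝ) - (k : ℝ) - 1 := by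
    rw [Nat.cast_sub h]; push_cast; ring
  have hnk : ((n + k : ℕ) : ℝ) = (n : ℝ) + k := by push_cast; ring
  rw [hc, hnk]
  rw [div_mul_eq_mul_div, div_mul_eq_mul_div]
  have hkr : (k : ℝ) + 1 ≤ (n : ℝ) := by exact_mod_cast h
  have hA : rfact (1 / 2 : ℝ) (n - (k + 1)) ≠ 0 := (rfact_half_pos _).ne'
  have hC : rfact (1 / 2 : ℝ) (n + k) ≠ 0 := (rfact_half_pos _).ne'
  have h1 : (1 / 2 + ((n : ℝ) - k - 1)) ≠ 0 := by
    have : (0 : ℝ) < 1 / 2 + ((n : ℝ) - k - 1) := by linarith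
    exact this.ne'
  have h2 : (1 / 2 + ((n : ℝ) + k)) ≠ 0 := by positivity
  rw [div_eq_div_iff (by positivity) (by positivity)]
  ring

lemma step (n k : ℕ) (hn : 3 ≤ n) (hk1 : 1 ≤ k) (hk : k + 1 ≤ n) :
    (-1 : ℝ) ^ (k - 1) * brkt (2 * n) (n - k) * (k : ℝ) ^ 4 =
      (-1 : ℝ) ^ (k - 1) * brkt (2 * n) (n - k) * Paux (n : ℝ) (k : ℝ) -
        (-1 : ℝ) ^ (k + 1 - 1) * brkt (2 * n) (n - (k + 1)) * Paux (n : ℝ) ((k + 1 : ℕ) : ℝ) := by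
  have h3 : (3 : ℝ) ≤ (n : ℝ) := by exact_mod_cast hn
  have hkr : (k : ℝ) + 1 ≤ (n : ℝ) := by exact_mod_cast hk
  have hk0 : (0 : ℝ) ≤ (k : ℝ) := Nat.cast_nonneg k
  have d1 : (2 * (n : ℝ) + 2 * k + 1) ≠ 0 := by positivity
  have d2 : (2 * (n : ℝ) - 3) ≠ 0 := by
    have : (0 : ℝ) < 2 * (n : ℝ) - 3 := by linarith
    exact this.ne'
  have d3 : (2 * (n : ℝ) - 5) ≠ 0 := by
    have : (0 : ℝ) < 2 * (n : ℝ) - 5 := by linarith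
    exact this.ne'
  have hb : brkt (2 * n) (n - (k + 1)) =
      brkt (2 * n) (n - k) * (2 * (n : ℝ) - 2 * k - 1) / (2 * (n : ℝ) + 2 * k + 1) := by
    rw [eq_div_iff d1]
    linear_combination brkt_rec n k hk
  have hk1' : k - 1 + 1 = k := by omega
  have hneg : (-1 : ℝ) ^ k = -(-1 : ℝ) ^ (k - 1) := by
    conv_lhs => rw [← hk1']
    rw [pow_succ]; ring
  rw [Nat.add_sub_cancel, hb, hneg]
  simp only [Paux]
  push_cast
  field_simp
  ring

lemma paux_one (n : ℝ) : Paux n 1 = 0 := by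
  unfold Paux
  rw [div_eq_zero_iff]
  left; ring

lemma brkt_self_zero (n : ℕ) : brkt n 0 = 1 := by
  unfold brkt
  rw [Nat.sub_zero, show rfact (1 / 2 : ℝ) 0 = 1 from rfl, one_mul,
    div_self (rfact_half_pos n).ne']

theorem C_four_eval (n : ℕ) (hn : 3 ≤ n) :
    ∑ k ∈ Finset.Icc 1 n, (-1 : ℝ) ^ (k - 1) * brkt (2 * n) (n - k) * (k : ℝ) ^ 4 =
      (-1 : ℝ) ^ n * ((n : ℝ) * ((n : ℝ) + 1)) *
          (2 * (n : ℝ) ^ 3 - (n : ℝ) ^ 2 - 5 * (n : ℝ) + 1) /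
        (2 * (2 * (n : ℝ) - 3) * (2 * (n : ℝ) - 5)) := by
  obtain ⟨m, rfl⟩ : ∃ m, n = m + 3 := ⟨n - 3, by omega⟩
  set N := m + 3 with hN
  set G : ℕ → ℝ := fun k => (-1 : ℝ) ^ (k - 1) * brkt (2 * N) (N - k) * Paux (N : ℝ) (k : ℝ)
    with hG
  have htop : ∑ k ∈ Finset.Icc 1 N, (-1 : ℝ) ^ (k - 1) * brkt (2 * N) (N - k) * (k : ℝ) ^ 4 =
      (∑ k ∈ Finset.Icc 1 (m + 2), (-1 : ℝ) ^ (k - 1) * brkt (2 * N) (N - k) * (k : ℝ) ^ 4) +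
        (-1 : ℝ) ^ (N - 1) * brkt (2 * N) (N - N) * (N : ℝ) ^ 4 := by
    rw [hN, Finset.sum_Icc_succ_top (by omega : 1 ≤ m + 2 + 1)]
  have hmid : ∑ k ∈ Finset.Icc 1 (m + 2),
      (-1 : ℝ) ^ (k - 1) * brkt (2 * N) (N - k) * (k : ℝ) ^ 4 = G 1 - G (m + 3) := by
    have hcongr : ∑ k ∈ Finset.Icc 1 (m + 2),
        (-1 : ℝ) ^ (k - 1) * brkt (2 * N) (N - k) * (k : ℝ) ^ 4 =
        ∑ k ∈ Finset.Icc 1 (m + 2), (G k - G (k + 1)) := by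
      refine Finset.sum_congr rfl fun k hk => ?_
      rw [Finset.mem_Icc] at hk
      have := step N k (by omega) hk.1 (by omega)
      simpa [hG] using this
    rw [hcongr, show Finset.Icc 1 (m + 2) = Finset.Ico 1 (m + 3) from (Finset.Ico_add_one_right_eq_Icc 1 (m+2)).symm,
      Finset.sum_Ico_eq_sum_range]
    calc ∑ i ∈ Finset.range (m + 3 - 1), (G (1 + i) - G (1 + i + 1))
        = ∑ i ∈ Finset.range (m + 2), ((fun j => G (1 + j)) i - (fun j => G (1 + j)) (i + 1)) := by
          refine Finset.sum_congr (by norm_num) fun i _ => ?_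
          simp only []
          rw [show 1 + (i + 1) = 1 + i + 1 by ring]
      _ = G (1 + 0) - G (1 + (m + 2)) := Finset.sum_range_sub' (fun j => G (1 + j)) (m + 2)
      _ = G 1 - G (m + 3) := by
          rw [show 1 + (m + 2) = m + 3 from by omega, show 1 + 0 = 1 from rfl]
  rw [htop, hmid]
  have hG1 : G 1 = 0 := by
    simp [hG, paux_one]
  have hNN : N - N = 0 := Nat.sub_self N
  rw [hG1, hNN, brkt_self_zero]
  rw [← hN]
  simp only [hG, hNN, brkt_self_zero]
  have hpow : (-1 : ℝ) ^ N = -(-1 : ℝ) ^ (N - 1) := by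
    have : N - 1 + 1 = N := by omega
    conv_lhs => rw [← this]
    rw [pow_succ]; ring
  rw [hpow]
  have hNr : (N : ℝ) = (m : ℝ) + 3 := by push_cast [hN]; ring
  have hm0 : (0 : ℝ) ≤ (m : ℝ) := Nat.cast_nonneg m
  have d2 : (2 * (N : ℝ) - 3) ≠ 0 := by
    rw [hNr]; have : (0 : ℝ) < 2 * ((m : ℝ) + 3) - 3 := by linarith
    exact this.ne'
  have d3 : (2 * (N : ℝ) - 5) ≠ 0 := by
    rw [hNr]; have : (0 : ℝ) < 2 * ((m : ℝ) + 3) - 5 := by linarith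
    exact this.ne'
  unfold Paux
  rw [hNr] at d2 d3 ⊢
  push_cast
  field_simp
  ring
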